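/- For a partition γ = (γ_1, γ_2) with γ_1 > γ_2 ≥ 1 and γ_1 + γ_2 ≤ d, the number λ_{n,d}((γ_1,γ_2)) of elements of L_{n,d} of type (γ_1,γ_2) equals Σ_{j'=1}^{d+1−γ_1−γ_2} C(d+1+j', γ_1+j') · C(d+1−γ_1, γ_2+j') · C(n, d+1+j'); when γ_1 = γ_2 the same sum is divided by 2. -/

import Mathlib

/-- `D_d({T_1,…,T_l}) = codim_d(⋂ᵢ Tᵢ) - Σᵢ codim_d(Tᵢ)` where `codim_d(X) = d+1-|X|`. -/
def DL {α : Type*} [DecidableEq α] [Fintype α] (d : ℕ) (T : Finset (Finset α)) : ℤ :=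
  (((d : ℤ) + 1) - (T.inf id).card) - ∑ X ∈ T, (((d : ℤ) + 1) - X.card)

/-- The rank function `ρ_d(T) = Σ_{X ∈ T} (d+1-|X|)`. -/
def rhoL {α : Type*} (d : ℕ) (T : Finset (Finset α)) : ℤ :=
  ∑ X ∈ T, (((d : ℤ) + 1) - X.card)

/-- The set `L_{n,d}` of collections `T ⊆ 2^{[n]}` with `0 ≤ |Tᵢ| ≤ d` and
`D_d(T') > 0` for all subcollections of size `> 1`. -/
def LLower (n d : ℕ) : Set (Finset (Finset (Fin n))) :=
  {T | (∀ X ∈ T, X.card ≤ d) ∧ ∀ T' ⊆ T, 1 < T'.card → 0 < DL d T'}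

/-- The order on `L_{n,d}`: `T ≤ T'` iff `T = T'`, or `ρ_d(T) < ρ_d(T')` and
every member of `T` contains some member of `T'`. -/
def leLow {α : Type*} (d : ℕ) (T T' : Finset (Finset α)) : Prop :=
  T = T' ∨ (rhoL d T < rhoL d T' ∧ ∀ X ∈ T, ∃ Y ∈ T', Y ⊆ X)

instance (n d : ℕ) : LE ↥(LLower n d) := ⟨fun A B => leLow d A.1 B.1⟩

open Finset

section Aux

variable {α : Type*} [DecidableEq α] [Fintype α]

/-- Pairs of subsets with given cardinalities and given union. -/
lemma count_pairs_union (m a b : ℕ) (hm : m ≤ a + b) (U : Finset α) (hU : U.card = m)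
    (ha : a ≤ m) (hb : b ≤ m) :
    (Finset.univ.filter fun p : Finset α × Finset α =>
        p.1 ∪ p.2 = U ∧ p.1.card = a ∧ p.2.card = b).card
      = m.choose a * a.choose (a + b - m) := by
  have key : (Finset.univ.filter fun p : Finset α × Finset α =>
        p.1 ∪ p.2 = U ∧ p.1.card = a ∧ p.2.card = b).card
      = ((U.powersetCard a).sigma fun T1 => T1.powersetCard (a + b - m)).card := by
    apply Finset.card_nbij' (i := fun p => ⟨p.1, p.1 ∩ p.2⟩)
      (j := fun q => (q.1, (U \ q.1) ∪ q.2))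
    · rintro ⟨T1, T2⟩ hp
      simp only [Finset.mem_coe, mem_filter, mem_univ, true_and] at hp
      obtain ⟨hu, h1, h2⟩ := hp
      have hsub : T1 ⊆ U := hu ▸ Finset.subset_union_left
      have hi : (T1 ∩ T2).card + (T1 ∪ T2).card = T1.card + T2.card :=
        Finset.card_inter_add_card_union _ _
      rw [hu, hU, h1, h2] at hi
      simp only [Finset.mem_coe, Finset.mem_sigma, Finset.mem_powersetCard]
      exact ⟨⟨hsub, h1⟩, Finset.inter_subset_left, by omega⟩
    · rintro ⟨T1, S⟩ hq
      simp only [Finset.mem_coe, Finset.mem_sigma, Finset.mem_powersetCard] at hq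
      obtain ⟨⟨hT1U, hT1⟩, hS, hScard⟩ := hq
      simp only [Finset.mem_coe, mem_filter, mem_univ, true_and]
      have hdisj : Disjoint (U \ T1) S :=
        Finset.disjoint_of_subset_right hS sdiff_disjoint
      refine ⟨?_, hT1, ?_⟩
      · rw [← Finset.union_assoc, Finset.union_sdiff_of_subset hT1U,
          Finset.union_eq_left.mpr (hS.trans hT1U)]
      · rw [Finset.card_union_of_disjoint hdisj, Finset.card_sdiff_of_subset hT1U, hU, hT1, hScard]
        omega
    · rintro ⟨T1, T2⟩ hp
      simp only [Finset.mem_coe, mem_filter, mem_univ, true_and] at hp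
      obtain ⟨hu, h1, h2⟩ := hp
      have : (U \ T1) ∪ (T1 ∩ T2) = T2 := by
        ext x
        simp only [← hu, Finset.mem_union, Finset.mem_sdiff, Finset.mem_inter]
        tauto
      simp only [this]
    · rintro ⟨T1, S⟩ hq
      simp only [Finset.mem_coe, Finset.mem_sigma, Finset.mem_powersetCard] at hq
      obtain ⟨⟨hT1U, hT1⟩, hS, hScard⟩ := hq
      have : T1 ∩ ((U \ T1) ∪ S) = S := by
        ext x
        simp only [Finset.mem_inter, Finset.mem_union, Finset.mem_sdiff]
        constructor
        · tauto
        · intro hx; exact ⟨hS hx, Or.inr hx⟩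
      simp only [this]
  rw [key, Finset.card_sigma]
  rw [Finset.sum_congr rfl (fun T1 hT1 => ?_), Finset.sum_const,
    Finset.card_powersetCard, hU, smul_eq_mul]
  rw [Finset.card_powersetCard, (Finset.mem_powersetCard.mp hT1).2]

end Aux

/-- Count of ordered pairs. -/
lemma pair_count (n d γ1 γ2 : ℕ) (h2 : 1 ≤ γ2) (h12 : γ2 ≤ γ1) (hsum : γ1 + γ2 ≤ d) :
    (Finset.univ.filter fun p : Finset (Fin n) × Finset (Fin n) =>
        p.1.card = d + 1 - γ1 ∧ p.2.card = d + 1 - γ2 ∧ (p.1 ∩ p.2).card ≤ d - γ1 - γ2).card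
      = ∑ j ∈ Finset.Icc 1 (d + 1 - γ1 - γ2),
          (d + 1 + j).choose (γ1 + j) * (d + 1 - γ1).choose (γ2 + j) * n.choose (d + 1 + j) := by
  classical
  set K := d + 1 - γ1 - γ2 with hK
  set a := d + 1 - γ1 with haa
  set b := d + 1 - γ2 with hbb
  rw [Finset.card_eq_sum_card_fiberwise (f := fun p => p.1 ∪ p.2)
    (t := (Finset.Icc 1 K).biUnion fun j => Finset.univ.powersetCard (d + 1 + j)) ?hmem]
  case hmem =>
    rintro ⟨T1, T2⟩ hp
    simp only [Finset.mem_coe, Finset.mem_filter, Finset.mem_univ, true_and] at hp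
    obtain ⟨h1, h2', h3⟩ := hp
    have hi : (T1 ∩ T2).card + (T1 ∪ T2).card = T1.card + T2.card :=
      Finset.card_inter_add_card_union _ _
    rw [h1, h2'] at hi
    simp only [Finset.mem_coe, Finset.mem_biUnion, Finset.mem_Icc, Finset.mem_powersetCard_univ]
    exact ⟨(T1 ∪ T2).card - (d + 1), by omega, by omega⟩
  rw [Finset.sum_biUnion ?hdisj]
  case hdisj =>
    intro j1 h1 j2 h2 hne
    simp only [Function.onFun]
    rw [Finset.disjoint_left]
    intro U hU1 hU2
    rw [Finset.mem_powersetCard_univ] at hU1 hU2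
    omega
  refine Finset.sum_congr rfl fun j hj => ?_
  rw [Finset.mem_Icc] at hj
  have hmn : a + b - (d + 1 + j) = a - (γ2 + j) := by omega
  have hsum' : ∀ U ∈ Finset.univ.powersetCard (d + 1 + j),
      ((Finset.univ.filter fun p : Finset (Fin n) × Finset (Fin n) =>
        p.1.card = a ∧ p.2.card = b ∧ (p.1 ∩ p.2).card ≤ d - γ1 - γ2).filter
          fun p => p.1 ∪ p.2 = U).card
      = (d + 1 + j).choose (γ1 + j) * (d + 1 - γ1).choose (γ2 + j) := by
    intro U hU
    rw [Finset.mem_powersetCard_univ] at hU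
    have heq : ((Finset.univ.filter fun p : Finset (Fin n) × Finset (Fin n) =>
        p.1.card = a ∧ p.2.card = b ∧ (p.1 ∩ p.2).card ≤ d - γ1 - γ2).filter
          fun p => p.1 ∪ p.2 = U)
        = Finset.univ.filter fun p : Finset (Fin n) × Finset (Fin n) =>
            p.1 ∪ p.2 = U ∧ p.1.card = a ∧ p.2.card = b := by
      ext ⟨T1, T2⟩
      simp only [Finset.mem_filter, Finset.mem_univ, true_and]
      constructor
      · tauto
      · rintro ⟨hu, h1, h2'⟩
        have hi : (T1 ∩ T2).card + (T1 ∪ T2).card = T1.card + T2.card :=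
          Finset.card_inter_add_card_union _ _
        rw [hu, hU, h1, h2'] at hi
        exact ⟨⟨h1, h2', by omega⟩, hu⟩
    rw [heq, count_pairs_union (d + 1 + j) a b (by omega) U hU (by omega) (by omega)]
    have e1 : (d + 1 + j).choose a = (d + 1 + j).choose (γ1 + j) := by
      rw [show a = (d + 1 + j) - (γ1 + j) by omega,
        Nat.choose_symm (show γ1 + j ≤ d + 1 + j by omega)]
    have e2 : a.choose (a + b - (d + 1 + j)) = a.choose (γ2 + j) := by
      rw [show a + b - (d + 1 + j) = a - (γ2 + j) by omega,
        Nat.choose_symm (show γ2 + j ≤ a by omega)]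
    rw [e1, e2]
  rw [Finset.sum_congr rfl hsum', Finset.sum_const, Finset.card_powersetCard,
    Finset.card_univ, Fintype.card_fin, smul_eq_mul]
  ring

lemma pair_multiset_eq {a b c e : ℕ} :
    ({a, b} : Multiset ℕ) = {c, e} ↔ (a = c ∧ b = e) ∨ (a = e ∧ b = c) := by
  constructor
  · intro h
    rw [show ({a, b} : Multiset ℕ) = a ::ₘ {b} from rfl,
      show ({c, e} : Multiset ℕ) = c ::ₘ {e} from rfl, Multiset.cons_eq_cons] at h
    rcases h with ⟨h1, h2⟩ | ⟨hne, cs, h1, h2⟩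
    · exact Or.inl ⟨h1, by simpa using h2⟩
    · rw [Multiset.singleton_eq_cons_iff] at h1 h2
      exact Or.inr ⟨h2.1.symm, h1.1⟩
  · rintro (⟨rfl, rfl⟩ | ⟨rfl, rfl⟩)
    · rfl
    · exact Multiset.cons_swap _ _ 0

lemma DL_pair {α : Type*} [DecidableEq α] [Fintype α] (d : ℕ) (T1 T2 : Finset α)
    (hne : T1 ≠ T2) :
    DL d {T1, T2} = (((d : ℤ) + 1) - ((T1 ∩ T2).card : ℤ))
      - ((((d : ℤ) + 1) - T1.card) + (((d : ℤ) + 1) - T2.card)) := by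
  unfold DL
  rw [Finset.sum_pair hne]
  congr 2
  rw [Finset.inf_insert, Finset.inf_singleton, Finset.inf_eq_inter]
  rfl

/-- Characterization of the members of the set in the theorem. -/
lemma mem_char (n d γ1 γ2 : ℕ) (h2 : 1 ≤ γ2) (h12 : γ2 ≤ γ1) (hsum : γ1 + γ2 ≤ d)
    (T : Finset (Finset (Fin n))) :
    (T ∈ LLower n d ∧ T.card = 2 ∧
        Multiset.map (fun X => d + 1 - X.card) T.val = ({γ1, γ2} : Multiset ℕ)) ↔
      ∃ T1 T2 : Finset (Fin n), T = {T1, T2} ∧ T1 ≠ T2 ∧ T1.card = d + 1 - γ1 ∧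
        T2.card = d + 1 - γ2 ∧ (T1 ∩ T2).card ≤ d - γ1 - γ2 := by
  constructor
  · rintro ⟨⟨hbd, hD⟩, hcard, hmul⟩
    obtain ⟨T1, T2, hne, rfl⟩ := Finset.card_eq_two.mp hcard
    have hval : ({T1, T2} : Finset (Finset (Fin n))).val = T1 ::ₘ {T2} := by
      rw [Finset.insert_val_of_notMem (by simpa using hne)]
      rfl
    rw [hval] at hmul
    simp only [Multiset.map_cons, Multiset.map_singleton] at hmul
    have hDT : 0 < DL d {T1, T2} := hD _ (le_refl _) (by rw [hcard]; omega)
    rw [DL_pair d T1 T2 hne] at hDT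
    rcases pair_multiset_eq.mp hmul with ⟨e1, e2⟩ | ⟨e1, e2⟩
    · have hc1 : T1.card = d + 1 - γ1 := by omega
      have hc2 : T2.card = d + 1 - γ2 := by omega
      refine ⟨T1, T2, rfl, hne, hc1, hc2, ?_⟩
      rw [hc1, hc2] at hDT
      have h1 : ((d + 1 - γ1 : ℕ) : ℤ) = (d : ℤ) + 1 - γ1 := by push_cast; omega
      have h2' : ((d + 1 - γ2 : ℕ) : ℤ) = (d : ℤ) + 1 - γ2 := by push_cast; omega
      rw [h1, h2'] at hDT
      omega
    · have hc1 : T1.card = d + 1 - γ2 := by omega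
      have hc2 : T2.card = d + 1 - γ1 := by omega
      refine ⟨T2, T1, Finset.pair_comm T1 T2, hne.symm, hc2, hc1, ?_⟩
      rw [hc1, hc2] at hDT
      have h1 : ((d + 1 - γ1 : ℕ) : ℤ) = (d : ℤ) + 1 - γ1 := by push_cast; omega
      have h2' : ((d + 1 - γ2 : ℕ) : ℤ) = (d : ℤ) + 1 - γ2 := by push_cast; omega
      rw [h1, h2'] at hDT
      rw [Finset.inter_comm]
      omega
  · rintro ⟨T1, T2, rfl, hne, hc1, hc2, hint⟩
    have hcard : ({T1, T2} : Finset (Finset (Fin n))).card = 2 := Finset.card_pair hne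
    refine ⟨⟨?_, ?_⟩, hcard, ?_⟩
    · intro X hX
      rcases Finset.mem_insert.mp hX with rfl | hX
      · omega
      · rw [Finset.mem_singleton] at hX
        subst hX
        omega
    · intro T' hT' hT'card
      have : T' = {T1, T2} :=
        Finset.eq_of_subset_of_card_le hT' (by rw [hcard]; omega)
      subst this
      rw [DL_pair d T1 T2 hne, hc1, hc2]
      have h1 : ((d + 1 - γ1 : ℕ) : ℤ) = (d : ℤ) + 1 - γ1 := by push_cast; omega
      have h2' : ((d + 1 - γ2 : ℕ) : ℤ) = (d : ℤ) + 1 - γ2 := by push_cast; omega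
      rw [h1, h2']
      omega
    · have hval : ({T1, T2} : Finset (Finset (Fin n))).val = T1 ::ₘ {T2} := by
        rw [Finset.insert_val_of_notMem (by simpa using hne)]
        rfl
      rw [hval]
      simp only [Multiset.map_cons, Multiset.map_singleton]
      rw [hc1, hc2]
      congr 2 <;> omega

theorem stmt18 (n d γ1 γ2 : ℕ) (h2 : 1 ≤ γ2) (h12 : γ2 ≤ γ1) (hsum : γ1 + γ2 ≤ d) :
    (γ2 < γ1 →
      {T | T ∈ LLower n d ∧ T.card = 2 ∧
          Multiset.map (fun X => d + 1 - X.card) T.val = ({γ1, γ2} : Multiset ℕ)}.ncard =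
        ∑ j ∈ Finset.Icc 1 (d + 1 - γ1 - γ2),
          (d + 1 + j).choose (γ1 + j) * (d + 1 - γ1).choose (γ2 + j) *
            n.choose (d + 1 + j)) ∧
    (γ1 = γ2 →
      2 * {T | T ∈ LLower n d ∧ T.card = 2 ∧
          Multiset.map (fun X => d + 1 - X.card) T.val = ({γ1, γ2} : Multiset ℕ)}.ncard =
        ∑ j ∈ Finset.Icc 1 (d + 1 - γ1 - γ2),
          (d + 1 + j).choose (γ1 + j) * (d + 1 - γ1).choose (γ2 + j) *
            n.choose (d + 1 + j)) := by
  classical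
  set sFin : Finset (Finset (Finset (Fin n))) :=
    Finset.univ.filter (fun T => T ∈ LLower n d ∧ T.card = 2 ∧
      Multiset.map (fun X => d + 1 - X.card) T.val = ({γ1, γ2} : Multiset ℕ)) with hsFin
  have hset : {T | T ∈ LLower n d ∧ T.card = 2 ∧
      Multiset.map (fun X => d + 1 - X.card) T.val = ({γ1, γ2} : Multiset ℕ)} = ↑sFin := by
    ext T
    simp [hsFin]
  have hmemS : ∀ T, T ∈ sFin ↔
      ∃ T1 T2 : Finset (Fin n), T = {T1, T2} ∧ T1 ≠ T2 ∧ T1.card = d + 1 - γ1 ∧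
        T2.card = d + 1 - γ2 ∧ (T1 ∩ T2).card ≤ d - γ1 - γ2 := by
    intro T
    rw [hsFin, Finset.mem_filter]
    simp only [Finset.mem_univ, true_and]
    exact mem_char n d γ1 γ2 h2 h12 hsum T
  set pFin : Finset (Finset (Fin n) × Finset (Fin n)) :=
    Finset.univ.filter (fun p : Finset (Fin n) × Finset (Fin n) =>
      p.1.card = d + 1 - γ1 ∧ p.2.card = d + 1 - γ2 ∧
        (p.1 ∩ p.2).card ≤ d - γ1 - γ2) with hpFin
  have hpcard := pair_count n d γ1 γ2 h2 h12 hsum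
  rw [hset, Set.ncard_coe_finset]
  constructor
  · intro hlt
    rw [← hpcard]
    symm
    apply Finset.card_nbij (i := fun p => ({p.1, p.2} : Finset (Finset (Fin n))))
    · rintro ⟨T1, T2⟩ hp
      simp only [hpFin, Finset.mem_coe, Finset.mem_filter, Finset.mem_univ, true_and] at hp
      obtain ⟨h1, h2', h3⟩ := hp
      rw [Finset.mem_coe, hmemS]
      exact ⟨T1, T2, rfl, fun h => by rw [h] at h1; omega, h1, h2', h3⟩
    · rintro ⟨T1, T2⟩ hp ⟨S1, S2⟩ hq hpq
      simp only [Finset.coe_filter, Set.mem_setOf_eq, Finset.mem_univ, true_and] at hp hq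
      simp only at hpq
      have hm1 : T1 ∈ ({S1, S2} : Finset (Finset (Fin n))) := by
        rw [← hpq]; exact Finset.mem_insert_self _ _
      have hm2 : T2 ∈ ({S1, S2} : Finset (Finset (Fin n))) := by
        rw [← hpq]; exact Finset.mem_insert_of_mem (Finset.mem_singleton_self _)
      rcases Finset.mem_insert.mp hm1 with rfl | hm1
      · rcases Finset.mem_insert.mp hm2 with rfl | hm2
        · exfalso; omega
        · rw [Finset.mem_singleton] at hm2; subst hm2; rfl
      · rw [Finset.mem_singleton] at hm1; subst hm1
        exfalso
        have := hp.1
        have := hq.2.1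
        omega
    · intro T hT
      rw [Finset.mem_coe, hmemS] at hT
      obtain ⟨T1, T2, rfl, hne, hc1, hc2, hint⟩ := hT
      refine ⟨(T1, T2), ?_, rfl⟩
      simp only [Finset.mem_coe, Finset.mem_filter, Finset.mem_univ, true_and]
      exact ⟨hc1, hc2, hint⟩
  · intro heq
    subst heq
    rw [← hpcard]
    have hmaps : ∀ p ∈ (Finset.univ.filter fun p : Finset (Fin n) × Finset (Fin n) =>
        p.1.card = d + 1 - γ1 ∧ p.2.card = d + 1 - γ1 ∧
          (p.1 ∩ p.2).card ≤ d - γ1 - γ1),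
        ({p.1, p.2} : Finset (Finset (Fin n))) ∈ sFin := by
      rintro ⟨T1, T2⟩ hp
      simp only [Finset.mem_filter, Finset.mem_univ, true_and] at hp
      obtain ⟨h1, h2', h3⟩ := hp
      rw [hmemS]
      refine ⟨T1, T2, rfl, ?_, h1, h2', h3⟩
      intro h
      subst h
      rw [Finset.inter_self] at h3
      omega
    rw [Finset.card_eq_sum_card_fiberwise hmaps]
    have hfib : ∀ T ∈ sFin,
        ((Finset.univ.filter fun p : Finset (Fin n) × Finset (Fin n) =>
          p.1.card = d + 1 - γ1 ∧ p.2.card = d + 1 - γ1 ∧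
            (p.1 ∩ p.2).card ≤ d - γ1 - γ1).filter
              fun p => ({p.1, p.2} : Finset (Finset (Fin n))) = T).card = 2 := by
      intro T hT
      rw [hmemS] at hT
      obtain ⟨T1, T2, rfl, hne, hc1, hc2, hint⟩ := hT
      have hKey : ((Finset.univ.filter fun p : Finset (Fin n) × Finset (Fin n) =>
          p.1.card = d + 1 - γ1 ∧ p.2.card = d + 1 - γ1 ∧
            (p.1 ∩ p.2).card ≤ d - γ1 - γ1).filter
              fun p => ({p.1, p.2} : Finset (Finset (Fin n))) = {T1, T2})
          = {(T1, T2), (T2, T1)} := by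
        ext ⟨S1, S2⟩
        simp only [Finset.mem_filter, Finset.mem_univ, true_and, Finset.mem_insert,
          Finset.mem_singleton, Prod.mk.injEq]
        constructor
        · rintro ⟨⟨hs1, hs2, hs3⟩, hpq⟩
          have hSne : S1 ≠ S2 := by
            intro h
            subst h
            rw [Finset.inter_self] at hs3
            omega
          have hm1 : S1 ∈ ({T1, T2} : Finset (Finset (Fin n))) := by
            rw [← hpq]; exact Finset.mem_insert_self _ _
          have hm2 : S2 ∈ ({T1, T2} : Finset (Finset (Fin n))) := by
            rw [← hpq]; exact Finset.mem_insert_of_mem (Finset.mem_singleton_self _)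
          rw [Finset.mem_insert, Finset.mem_singleton] at hm1 hm2
          rcases hm1 with rfl | rfl
          · rcases hm2 with rfl | rfl
            · exact absurd rfl hSne
            · exact Or.inl ⟨rfl, rfl⟩
          · rcases hm2 with rfl | rfl
            · exact Or.inr ⟨rfl, rfl⟩
            · exact absurd rfl hSne
        · rintro (⟨rfl, rfl⟩ | ⟨rfl, rfl⟩)
          · exact ⟨⟨hc1, hc2, hint⟩, rfl⟩
          · exact ⟨⟨hc2, hc1, by rwa [Finset.inter_comm]⟩, Finset.pair_comm _ _⟩
      rw [hKey]
      rw [Finset.card_pair (by simp [Prod.ext_iff]; intro h; exact fun _ => hne h)]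
    rw [Finset.sum_congr rfl hfib, Finset.sum_const, smul_eq_mul]
    ring
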